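/- Riemann-sum representation of the sewing map: let T > 0, μ > 1, κ ∈ [0,μ], and let g : S_T² → L^p(ℝ^n) be continuous such that the three-parameter increment (δ̂g)_{tus} = g_{ts} − g_{tu} − S_{t−u}(g_{us}) satisfies ‖(δ̂g)_{tus}‖_{L^p} ≤ C (t−u)^κ (u−s)^{μ−κ}. Let Λ(δ̂g) be the unique continuous map on S_T² with values in L^p(ℝ^n) satisfying δ̂(Λ(δ̂g)) = δ̂g and sup_{s<t} ‖(Λ(δ̂g))_{ts}‖_{L^p}/(t−s)^μ < ∞ (given by the sewing theorem). Then, setting f_t = g_{t0} − (Λ(δ̂g))_{t0}, one has g_{ts} − (Λ(δ̂g))_{ts} = f_t − S_{t−s} f_s for all (s,t) ∈ S_T², and for every 0 ≤ s ≤ t ≤ T, f_t − S_{t−s} f_s = lim Σ_{k} S_{t−t_{k+1}} (g_{t_{k+1} t_k}), the limit in L^p(ℝ^n) being taken over partitions s = t_0 < t_1 < … < t_m = t of [s,t] as the mesh tends to 0. -/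

import Mathlib

open MeasureTheory Real
open scoped ENNReal

/-- The heat kernel on ℝ^n: `g_t(ξ) = (2πt)^(-n/2) exp(-|ξ|²/(2t))`. -/
noncomputable def heatKernel (n : ℕ) (t : ℝ) : EuclideanSpace ℝ (Fin n) → ℝ :=
  fun ξ => (2 * π * t) ^ (-(n : ℝ) / 2) * Real.exp (-‖ξ‖ ^ 2 / (2 * t))

/-- Convolution of two real functions on ℝ^n. -/
noncomputable def convol {n : ℕ} (f g : EuclideanSpace ℝ (Fin n) → ℝ) :
    EuclideanSpace ℝ (Fin n) → ℝ :=
  fun ξ => ∫ η, f η * g (ξ - η)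

/-- The Lebesgue space `L^p(ℝ^n)`. -/
abbrev LpR (n : ℕ) (p : ℝ) : Type :=
  Lp ℝ (ENNReal.ofReal p) (volume : Measure (EuclideanSpace ℝ (Fin n)))

/- ### Auxiliary lemmas -/

lemma heatKernel_pos (n : ℕ) {t : ℝ} (ht : 0 < t) (ξ : EuclideanSpace ℝ (Fin n)) :
    0 < heatKernel n t ξ := by
  have hπ := Real.pi_pos
  unfold heatKernel
  positivity

lemma heatKernel_continuous (n : ℕ) (t : ℝ) : Continuous (heatKernel n t) := by
  unfold heatKernel
  exact continuous_const.mul (((continuous_norm.pow 2).neg.div_const (2 * t)).rexp)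

lemma heatKernel_integrable (n : ℕ) {t : ℝ} (ht : 0 < t) :
    Integrable (heatKernel n t) (volume : Measure (EuclideanSpace ℝ (Fin n))) := by
  have hb : (0 : ℝ) < (2 * t)⁻¹ := by positivity
  have h1 : Integrable (fun ξ : EuclideanSpace ℝ (Fin n) => rexp (-‖ξ‖ ^ 2 / (2 * t)))
      volume := by
    have h2 := (GaussianFourier.integrable_cexp_neg_mul_sq_norm_add
      (b := ((2 * t)⁻¹ : ℂ)) (by simpa using hb) 0 (0 : EuclideanSpace ℝ (Fin n))).re
    apply h2.congr
    filter_upwards with v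
    simp only [zero_mul, add_zero, RCLike.re_to_complex]
    rw [show -(2 * (t : ℂ))⁻¹ * (‖v‖ : ℂ) ^ 2 = ((-‖v‖ ^ 2 / (2 * t) : ℝ) : ℂ) from by
      push_cast; ring, Complex.exp_ofReal_re]
  exact h1.const_mul _

lemma heatKernel_integral_one (n : ℕ) {t : ℝ} (ht : 0 < t) :
    ∫ ξ, heatKernel n t ξ = 1 := by
  have hb : (0 : ℝ) < (2 * t)⁻¹ := by positivity
  have hπ := Real.pi_pos
  have h2πt : (0 : ℝ) < 2 * π * t := by positivity
  have hgauss := GaussianFourier.integral_rexp_neg_mul_sq_norm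
    (V := EuclideanSpace ℝ (Fin n)) hb
  unfold heatKernel
  rw [MeasureTheory.integral_const_mul]
  have hexp : ∀ ξ : EuclideanSpace ℝ (Fin n),
      -‖ξ‖ ^ 2 / (2 * t) = -(2 * t)⁻¹ * ‖ξ‖ ^ 2 := by
    intro ξ; ring
  simp_rw [hexp]
  rw [hgauss, finrank_euclideanSpace_fin]
  have hdiv : π / (2 * t)⁻¹ = 2 * π * t := by rw [div_eq_mul_inv, inv_inv]; ring
  rw [hdiv, ← Real.rpow_add h2πt]
  have : -(n : ℝ) / 2 + (n : ℝ) / 2 = 0 := by ring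
  rw [this, Real.rpow_zero]

lemma heatKernel_lintegral_one (n : ℕ) {t : ℝ} (ht : 0 < t) :
    ∫⁻ ξ, ENNReal.ofReal (heatKernel n t ξ) = 1 := by
  rw [← MeasureTheory.ofReal_integral_eq_lintegral_ofReal (heatKernel_integrable n ht)
    (Filter.Eventually.of_forall fun ξ => (heatKernel_pos n ht ξ).le)]
  rw [heatKernel_integral_one n ht, ENNReal.ofReal_one]

/-- Hölder step: for a weight of total mass 1, `(∫ k F)^p ≤ ∫ k F^p`. -/
lemma holder_mass_one {α : Type*} [MeasurableSpace α] {μ : Measure α} {p : ℝ} (hp : 1 ≤ p)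
    {k F : α → ℝ≥0∞} (hk : Measurable k) (hk0 : ∀ a, k a ≠ 0) (hktop : ∀ a, k a ≠ ⊤)
    (hmass : ∫⁻ a, k a ∂μ = 1) (hF : AEMeasurable F μ) :
    (∫⁻ a, k a * F a ∂μ) ^ p ≤ ∫⁻ a, k a * F a ^ p ∂μ := by
  have hp0 : (0 : ℝ) < p := lt_of_lt_of_le zero_lt_one hp
  rcases eq_or_lt_of_le hp with h1 | h1
  · simp only [← h1, ENNReal.rpow_one]
    exact le_rfl
  · set q : ℝ := p / (p - 1) with hq
    have hpq : p.HolderConjugate q := Real.HolderConjugate.conjExponent h1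
    have hq0 : q ≠ 0 := hpq.symm.ne_zero
    have hkey : ∀ a, k a * F a = (k a ^ (1 / q)) * (k a ^ (1 / p) * F a) := by
      intro a
      rw [← mul_assoc, one_div, one_div, ← ENNReal.rpow_add _ _ (hk0 a) (hktop a)]
      rw [hpq.symm.inv_add_inv_eq_one, ENNReal.rpow_one]
    have hmeas1 : AEMeasurable (fun a => k a ^ (1 / q)) μ :=
      (ENNReal.continuous_rpow_const.measurable.comp hk).aemeasurable
    have hmeas2 : AEMeasurable (fun a => k a ^ (1 / p) * F a) μ :=
      ((ENNReal.continuous_rpow_const.measurable.comp hk).aemeasurable).mul hF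
    have hH := ENNReal.lintegral_mul_le_Lp_mul_Lq μ hpq.symm hmeas1 hmeas2
    have e1 : ∫⁻ a, (k a ^ (1 / q)) ^ q ∂μ = 1 := by
      rw [← hmass]
      apply lintegral_congr
      intro a
      rw [← ENNReal.rpow_mul, one_div, inv_mul_cancel₀ hq0, ENNReal.rpow_one]
    have e2 : ∀ a, (k a ^ (1 / p) * F a) ^ p = k a * F a ^ p := by
      intro a
      rw [ENNReal.mul_rpow_of_nonneg _ _ hp0.le, ← ENNReal.rpow_mul, one_div,
        inv_mul_cancel₀ hp0.ne', ENNReal.rpow_one]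
    have hH2 : ∫⁻ a, k a * F a ∂μ ≤ (∫⁻ a, k a * F a ^ p ∂μ) ^ (1 / p) := by
      calc ∫⁻ a, k a * F a ∂μ
          = ∫⁻ a, ((fun a => k a ^ (1 / q)) * (fun a => k a ^ (1 / p) * F a)) a ∂μ := by
            apply lintegral_congr; intro a; simpa using hkey a
        _ ≤ (∫⁻ a, (k a ^ (1 / q)) ^ q ∂μ) ^ (1 / q) * (∫⁻ a, (k a ^ (1 / p) * F a) ^ p ∂μ) ^ (1 / p) := hH
        _ = (∫⁻ a, k a * F a ^ p ∂μ) ^ (1 / p) := by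
            rw [e1, ENNReal.one_rpow, one_mul]
            congr 1
            exact lintegral_congr fun a => e2 a
    calc (∫⁻ a, k a * F a ∂μ) ^ p ≤ ((∫⁻ a, k a * F a ^ p ∂μ) ^ (1 / p)) ^ p :=
          ENNReal.rpow_le_rpow hH2 hp0.le
      _ = ∫⁻ a, k a * F a ^ p ∂μ := by
          rw [← ENNReal.rpow_mul, one_div, inv_mul_cancel₀ hp0.ne', ENNReal.rpow_one]

/-- Young's inequality special case: convolution with the heat kernel does not increase
the `L^p` norm. -/
lemma young_heat {n : ℕ} {p : ℝ} (hp : 1 ≤ p) {t : ℝ} (ht : 0 < t)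
    {f : EuclideanSpace ℝ (Fin n) → ℝ} (hf : AEStronglyMeasurable f volume) :
    eLpNorm (convol (heatKernel n t) f) (ENNReal.ofReal p) volume
      ≤ eLpNorm f (ENNReal.ofReal p) volume := by
  have hp0 : (0 : ℝ) < p := lt_of_lt_of_le zero_lt_one hp
  have hP0 : ENNReal.ofReal p ≠ 0 := by
    simp only [ne_eq, ENNReal.ofReal_eq_zero, not_le]; exact hp0
  have hPt : ENNReal.ofReal p ≠ ⊤ := ENNReal.ofReal_ne_top
  have hkpos : ∀ ξ, 0 < heatKernel n t ξ := heatKernel_pos n ht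
  have hkm : Measurable fun η => ENNReal.ofReal (heatKernel n t η) :=
    ENNReal.measurable_ofReal.comp (heatKernel_continuous n t).measurable
  have hmass : ∫⁻ η, ENNReal.ofReal (heatKernel n t η) = 1 := heatKernel_lintegral_one n ht
  rw [eLpNorm_eq_lintegral_rpow_enorm_toReal hP0 hPt, eLpNorm_eq_lintegral_rpow_enorm_toReal hP0 hPt]
  simp only [ENNReal.toReal_ofReal hp0.le]
  apply ENNReal.rpow_le_rpow _ (by positivity : (0:ℝ) ≤ 1 / p)
  -- product-measurability of (ξ, η) ↦ ‖f (ξ - η)‖ₑ ^ p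
  have hqmp_prod : Measure.QuasiMeasurePreserving (fun z : EuclideanSpace ℝ (Fin n) × EuclideanSpace ℝ (Fin n) => z.1 - z.2)
      ((volume : Measure (EuclideanSpace ℝ (Fin n))).prod volume) volume := by
    exact (Measure.quasiMeasurePreserving_fst).comp
      (measurePreserving_sub_prod (volume : Measure (EuclideanSpace ℝ (Fin n))) volume).quasiMeasurePreserving
  have h1 : AEMeasurable (fun z : EuclideanSpace ℝ (Fin n) × EuclideanSpace ℝ (Fin n) => f (z.1 - z.2)) ((volume : Measure (EuclideanSpace ℝ (Fin n))).prod volume) := by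
    exact hf.aemeasurable.comp_quasiMeasurePreserving hqmp_prod
  have hF2 : AEMeasurable (fun z : EuclideanSpace ℝ (Fin n) × EuclideanSpace ℝ (Fin n) => (‖f (z.1 - z.2)‖₊ : ℝ≥0∞) ^ p)
      ((volume : Measure (EuclideanSpace ℝ (Fin n))).prod volume) := by
    exact
      ENNReal.continuous_rpow_const.measurable.comp_aemeasurable h1.enorm
  have key : ∀ ξ : EuclideanSpace ℝ (Fin n), (‖convol (heatKernel n t) f ξ‖₊ : ℝ≥0∞) ^ p
      ≤ ∫⁻ η, ENNReal.ofReal (heatKernel n t η) * (‖f (ξ - η)‖₊ : ℝ≥0∞) ^ p := by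
    intro ξ
    have hqmp : Measure.QuasiMeasurePreserving (fun η : EuclideanSpace ℝ (Fin n) => ξ - η) volume volume := by
      have h1 : MeasurePreserving (fun η : EuclideanSpace ℝ (Fin n) => -η + ξ) volume volume :=
        (measurePreserving_add_right volume ξ).comp (Measure.measurePreserving_neg volume)
      have h2 : (fun η : EuclideanSpace ℝ (Fin n) => ξ - η) = fun η : EuclideanSpace ℝ (Fin n) => -η + ξ := by
        funext η; rw [sub_eq_neg_add]
      rw [h2]
      exact h1.quasiMeasurePreserving
    have hfa : AEMeasurable (fun η : EuclideanSpace ℝ (Fin n) => f (ξ - η)) volume := by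
      exact hf.aemeasurable.comp_quasiMeasurePreserving hqmp
    have hFa : AEMeasurable (fun η : EuclideanSpace ℝ (Fin n) => (‖f (ξ - η)‖₊ : ℝ≥0∞)) volume := hfa.enorm
    have step1 : (‖convol (heatKernel n t) f ξ‖₊ : ℝ≥0∞)
        ≤ ∫⁻ η, ENNReal.ofReal (heatKernel n t η) * (‖f (ξ - η)‖₊ : ℝ≥0∞) := by
      calc (‖convol (heatKernel n t) f ξ‖₊ : ℝ≥0∞) ≤ ∫⁻ η, (‖heatKernel n t η * f (ξ - η)‖₊ : ℝ≥0∞) :=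
            enorm_integral_le_lintegral_enorm _
        _ = ∫⁻ η, ENNReal.ofReal (heatKernel n t η) * (‖f (ξ - η)‖₊ : ℝ≥0∞) := by
            apply lintegral_congr; intro η
            rw [nnnorm_mul, ENNReal.coe_mul, ← enorm_eq_nnnorm, Real.enorm_eq_ofReal (hkpos η).le]
    calc (‖convol (heatKernel n t) f ξ‖₊ : ℝ≥0∞) ^ p
        ≤ (∫⁻ η, ENNReal.ofReal (heatKernel n t η) * (‖f (ξ - η)‖₊ : ℝ≥0∞)) ^ p :=
          ENNReal.rpow_le_rpow step1 hp0.le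
      _ ≤ ∫⁻ η, ENNReal.ofReal (heatKernel n t η) * (‖f (ξ - η)‖₊ : ℝ≥0∞) ^ p :=
          holder_mass_one hp hkm
            (fun η => by simp [ENNReal.ofReal_eq_zero, not_le, hkpos η])
            (fun η => ENNReal.ofReal_ne_top) hmass hFa
  calc ∫⁻ ξ, (‖convol (heatKernel n t) f ξ‖₊ : ℝ≥0∞) ^ p
      ≤ ∫⁻ ξ, ∫⁻ η, ENNReal.ofReal (heatKernel n t η) * (‖f (ξ - η)‖₊ : ℝ≥0∞) ^ p :=
        lintegral_mono key
    _ = ∫⁻ η, ∫⁻ ξ, ENNReal.ofReal (heatKernel n t η) * (‖f (ξ - η)‖₊ : ℝ≥0∞) ^ p := by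
        apply lintegral_lintegral_swap
        exact ((hkm.comp measurable_snd).aemeasurable).mul hF2
    _ = ∫⁻ η, ENNReal.ofReal (heatKernel n t η) * ∫⁻ ξ, (‖f (ξ - η)‖₊ : ℝ≥0∞) ^ p := by
        apply lintegral_congr; intro η
        exact lintegral_const_mul' _ _ ENNReal.ofReal_ne_top
    _ = ∫⁻ η, ENNReal.ofReal (heatKernel n t η) * ∫⁻ ξ, (‖f ξ‖₊ : ℝ≥0∞) ^ p := by
        apply lintegral_congr; intro η
        congr 1
        exact lintegral_sub_right_eq_self (fun ξ => (‖f ξ‖₊ : ℝ≥0∞) ^ p) η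
    _ = ∫⁻ ξ, (‖f ξ‖₊ : ℝ≥0∞) ^ p := by
        rw [lintegral_mul_const'' _ hkm.aemeasurable, hmass, one_mul]

/-- The heat semigroup is a contraction on `L^p`. -/
lemma S_contraction {n : ℕ} {p : ℝ} (hp : 1 ≤ p) [Fact (1 ≤ ENNReal.ofReal p)]
    (S : ℝ → LpR n p →L[ℝ] LpR n p)
    (hS0 : S 0 = ContinuousLinearMap.id ℝ (LpR n p))
    (hSheat : ∀ t : ℝ, 0 < t → ∀ φ : LpR n p,
      ⇑(S t φ) =ᵐ[volume] convol (heatKernel n t) ⇑φ)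
    {r : ℝ} (hr : 0 ≤ r) (φ : LpR n p) : ‖S r φ‖ ≤ ‖φ‖ := by
  rcases hr.eq_or_lt with h | h
  · rw [← h, hS0, ContinuousLinearMap.id_apply]
  · rw [Lp.norm_def, Lp.norm_def]
    apply ENNReal.toReal_mono (Lp.eLpNorm_ne_top φ)
    calc eLpNorm (⇑(S r φ)) (ENNReal.ofReal p) volume
        = eLpNorm (convol (heatKernel n r) ⇑φ) (ENNReal.ofReal p) volume :=
          eLpNorm_congr_ae (hSheat r h φ)
      _ ≤ eLpNorm (⇑φ) (ENNReal.ofReal p) volume :=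
          young_heat hp h (Lp.aestronglyMeasurable φ)

/-- Riemann-sum representation of the sewing map.  If
`g : S_T² → L^p(ℝ^n)` is continuous with `‖(δ̂g)_{tus}‖ ≤ C (t-u)^κ (u-s)^{μ-κ}`
(`μ > 1`), and `Λ` is the map produced by the sewing theorem (continuous on the
simplex, `δ̂Λ = δ̂g`, `‖Λ_{ts}‖ = O((t-s)^μ)`), then with `f_t = g_{t0} - Λ_{t0}`
one has `g_{ts} - Λ_{ts} = f_t - S_{t-s} f_s`, and `f_t - S_{t-s} f_s` is the limit
in `L^p` of the Riemann sums `Σ_k S_{t-t_{k+1}}(g_{t_{k+1} t_k})` over partitions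
of `[s,t]` whose mesh tends to `0`. -/
theorem sewing_riemann_sum_representation
    (n : ℕ) (hn : 1 ≤ n) (p : ℝ) (hp : 1 ≤ p) [Fact (1 ≤ ENNReal.ofReal p)]
    (S : ℝ → LpR n p →L[ℝ] LpR n p)
    (hS0 : S 0 = ContinuousLinearMap.id ℝ (LpR n p))
    (hSheat : ∀ t : ℝ, 0 < t → ∀ φ : LpR n p,
      ⇑(S t φ) =ᵐ[volume] convol (heatKernel n t) ⇑φ)
    (T : ℝ) (hT : 0 < T) (μ : ℝ) (hμ : 1 < μ) (κ : ℝ) (hκ0 : 0 ≤ κ) (hκμ : κ ≤ μ)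
    (g : ℝ → ℝ → LpR n p)
    (hgcont : ContinuousOn (fun r : ℝ × ℝ => g r.1 r.2)
      {r : ℝ × ℝ | 0 ≤ r.2 ∧ r.2 ≤ r.1 ∧ r.1 ≤ T})
    (C : ℝ)
    (hδg : ∀ s u t : ℝ, 0 ≤ s → s ≤ u → u ≤ t → t ≤ T →
      ‖g t s - g t u - S (t - u) (g u s)‖ ≤ C * (t - u) ^ κ * (u - s) ^ (μ - κ))
    (Λg : ℝ → ℝ → LpR n p)
    (hΛcont : ContinuousOn (fun r : ℝ × ℝ => Λg r.1 r.2)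
      {r : ℝ × ℝ | 0 ≤ r.2 ∧ r.2 ≤ r.1 ∧ r.1 ≤ T})
    (hΛbound : ∃ K : ℝ, ∀ s t : ℝ, 0 ≤ s → s ≤ t → t ≤ T → ‖Λg t s‖ ≤ K * (t - s) ^ μ)
    (hΛδ : ∀ s u t : ℝ, 0 ≤ s → s ≤ u → u ≤ t → t ≤ T →
      Λg t s - Λg t u - S (t - u) (Λg u s) = g t s - g t u - S (t - u) (g u s)) :
    (∀ s t : ℝ, 0 ≤ s → s ≤ t → t ≤ T →
      g t s - Λg t s = (g t 0 - Λg t 0) - S (t - s) (g s 0 - Λg s 0)) ∧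
    (∀ s t : ℝ, 0 ≤ s → s ≤ t → t ≤ T →
      ∀ ε : ℝ, 0 < ε → ∃ δ : ℝ, 0 < δ ∧
        ∀ (m : ℕ) (σ : ℕ → ℝ), 0 < m → σ 0 = s → σ m = t →
          (∀ k < m, σ k ≤ σ (k + 1)) → (∀ k < m, σ (k + 1) - σ k ≤ δ) →
          ‖((g t 0 - Λg t 0) - S (t - s) (g s 0 - Λg s 0))
            - ∑ k ∈ Finset.range m, S (t - σ (k + 1)) (g (σ (k + 1)) (σ k))‖ < ε) := by
  have part1 : ∀ s t : ℝ, 0 ≤ s → s ≤ t → t ≤ T →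
      g t s - Λg t s = (g t 0 - Λg t 0) - S (t - s) (g s 0 - Λg s 0) := by
    intro s t hs hst htT
    have h := hΛδ 0 s t le_rfl hs hst htT
    have h0 := sub_eq_zero_of_eq h
    rw [map_sub, ← sub_eq_zero]
    calc (g t s - Λg t s) - ((g t 0 - Λg t 0) - (S (t - s) (g s 0) - S (t - s) (Λg s 0)))
        = (Λg t 0 - Λg t s - S (t - s) (Λg s 0)) - (g t 0 - g t s - S (t - s) (g s 0)) := by
          abel
      _ = 0 := h0
  refine ⟨part1, ?_⟩
  intro s t hs hst htT ε hε
  obtain ⟨K, hK⟩ := hΛbound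
  set K' : ℝ := max K 0 + 1 with hK'def
  have hK'pos : 0 < K' := by
    have : (0:ℝ) ≤ max K 0 := le_max_right K 0
    linarith
  have hKK' : K ≤ K' := by
    have : K ≤ max K 0 := le_max_left K 0
    linarith
  set A : ℝ := K' * (T + 1) with hAdef
  have hApos : 0 < A := by
    have : (0:ℝ) < T + 1 := by linarith
    positivity
  have hμ10 : (0:ℝ) < μ - 1 := by linarith
  set δ : ℝ := min 1 ((ε / A) ^ (1 / (μ - 1))) with hδdef
  have hεA : 0 < ε / A := div_pos hε hApos
  have hδpos : 0 < δ := by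
    apply lt_min one_pos
    exact Real.rpow_pos_of_pos hεA _
  have hδpow : δ ^ (μ - 1) ≤ ε / A := by
    have h1 : δ ≤ (ε / A) ^ (1 / (μ - 1)) := min_le_right _ _
    have h2 : δ ^ (μ - 1) ≤ ((ε / A) ^ (1 / (μ - 1))) ^ (μ - 1) :=
      Real.rpow_le_rpow hδpos.le h1 hμ10.le
    calc δ ^ (μ - 1) ≤ ((ε / A) ^ (1 / (μ - 1))) ^ (μ - 1) := h2
      _ = (ε / A) ^ ((1 / (μ - 1)) * (μ - 1)) := by rw [← Real.rpow_mul hεA.le]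
      _ = ε / A := by
          rw [one_div, inv_mul_cancel₀ hμ10.ne', Real.rpow_one]
  refine ⟨δ, hδpos, ?_⟩
  intro m σ hm hσ0 hσm hmono hmesh
  -- monotonicity of the partition
  have hmono2 : ∀ b ≤ m, ∀ a ≤ b, σ a ≤ σ b := by
    intro b
    induction b with
    | zero => intro _ a ha; interval_cases a; exact le_rfl
    | succ b ih =>
      intro hbm a ha
      rcases eq_or_lt_of_le ha with h | h
      · rw [h]
      · calc σ a ≤ σ b := ih (le_trans (Nat.le_succ b) hbm) a (Nat.lt_succ_iff.mp h)
          _ ≤ σ (b + 1) := hmono b (Nat.lt_of_succ_le hbm)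
  have hσ_lb : ∀ j ≤ m, s ≤ σ j := by
    intro j hj
    rw [← hσ0]; exact hmono2 j hj 0 (Nat.zero_le j)
  have hσ_ub : ∀ j ≤ m, σ j ≤ t := by
    intro j hj
    rw [← hσm]; exact hmono2 m le_rfl j hj
  have hgΛ_diag : g t t = Λg t t := by
    have h := hΛδ t t t (le_trans hs hst) le_rfl le_rfl htT
    simp only [sub_self] at h
    rw [hS0] at h
    simp only [ContinuousLinearMap.id_apply, zero_sub, neg_inj] at h
    exact h.symm
  -- per-interval identity
  have hstep : ∀ k, k < m →
      S (t - σ (k + 1)) (g (σ (k + 1)) (σ k)) - S (t - σ (k + 1)) (Λg (σ (k + 1)) (σ k))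
        = (g t (σ k) - Λg t (σ k)) - (g t (σ (k + 1)) - Λg t (σ (k + 1))) := by
    intro k hk
    have hk1 : k + 1 ≤ m := Nat.succ_le_of_lt hk
    have h := hΛδ (σ k) (σ (k + 1)) t (le_trans hs (hσ_lb k hk.le))
      (hmono k hk) (hσ_ub (k + 1) hk1) htT
    have h0 := sub_eq_zero_of_eq h
    rw [← sub_eq_zero]
    calc (S (t - σ (k + 1)) (g (σ (k + 1)) (σ k)) - S (t - σ (k + 1)) (Λg (σ (k + 1)) (σ k)))
          - ((g t (σ k) - Λg t (σ k)) - (g t (σ (k + 1)) - Λg t (σ (k + 1))))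
        = (Λg t (σ k) - Λg t (σ (k + 1)) - S (t - σ (k + 1)) (Λg (σ (k + 1)) (σ k)))
            - (g t (σ k) - g t (σ (k + 1)) - S (t - σ (k + 1)) (g (σ (k + 1)) (σ k))) := by
          abel
      _ = 0 := h0
  -- telescoping
  have htele : ∑ k ∈ Finset.range m,
      (S (t - σ (k + 1)) (g (σ (k + 1)) (σ k)) - S (t - σ (k + 1)) (Λg (σ (k + 1)) (σ k)))
        = (g t s - Λg t s) - (g t t - Λg t t) := by
    rw [Finset.sum_congr rfl (fun k hk => hstep k (Finset.mem_range.mp hk))]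
    rw [Finset.sum_range_sub' (fun j => g t (σ j) - Λg t (σ j)) m]
    rw [hσ0, hσm]
  -- rewrite the target
  have hrewrite : ((g t 0 - Λg t 0) - S (t - s) (g s 0 - Λg s 0))
      - ∑ k ∈ Finset.range m, S (t - σ (k + 1)) (g (σ (k + 1)) (σ k))
      = -(∑ k ∈ Finset.range m, S (t - σ (k + 1)) (Λg (σ (k + 1)) (σ k))) := by
    rw [← part1 s t hs hst htT]
    have hsplit : ∑ k ∈ Finset.range m, S (t - σ (k + 1)) (g (σ (k + 1)) (σ k))
        = ∑ k ∈ Finset.range m,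
            (S (t - σ (k + 1)) (g (σ (k + 1)) (σ k)) - S (t - σ (k + 1)) (Λg (σ (k + 1)) (σ k)))
          + ∑ k ∈ Finset.range m, S (t - σ (k + 1)) (Λg (σ (k + 1)) (σ k)) := by
      rw [← Finset.sum_add_distrib]
      apply Finset.sum_congr rfl
      intro k _
      abel
    rw [hsplit, htele, hgΛ_diag]
    abel
  rw [hrewrite, norm_neg]
  -- norm estimate
  have hbound : ∀ k, k < m →
      ‖S (t - σ (k + 1)) (Λg (σ (k + 1)) (σ k))‖ ≤ K' * δ ^ (μ - 1) * (σ (k + 1) - σ k) := by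
    intro k hk
    have hk1 : k + 1 ≤ m := Nat.succ_le_of_lt hk
    have hΔ0 : 0 ≤ σ (k + 1) - σ k := sub_nonneg.mpr (hmono k hk)
    have hΔδ : σ (k + 1) - σ k ≤ δ := hmesh k hk
    have hr0 : 0 ≤ t - σ (k + 1) := sub_nonneg.mpr (hσ_ub (k + 1) hk1)
    have h1 : ‖S (t - σ (k + 1)) (Λg (σ (k + 1)) (σ k))‖ ≤ ‖Λg (σ (k + 1)) (σ k)‖ :=
      S_contraction hp S hS0 hSheat hr0 _
    have h2 : ‖Λg (σ (k + 1)) (σ k)‖ ≤ K * (σ (k + 1) - σ k) ^ μ :=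
      hK (σ k) (σ (k + 1)) (le_trans hs (hσ_lb k hk.le)) (hmono k hk)
        (le_trans (hσ_ub (k + 1) hk1) htT)
    have h3 : K * (σ (k + 1) - σ k) ^ μ ≤ K' * (σ (k + 1) - σ k) ^ μ :=
      mul_le_mul_of_nonneg_right hKK' (Real.rpow_nonneg hΔ0 μ)
    have h4 : (σ (k + 1) - σ k) ^ μ ≤ δ ^ (μ - 1) * (σ (k + 1) - σ k) := by
      rcases eq_or_lt_of_le hΔ0 with heq | hlt
      · rw [← heq, Real.zero_rpow (by linarith : μ ≠ 0), mul_zero]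
      · have e1 : (σ (k + 1) - σ k) ^ μ
            = (σ (k + 1) - σ k) ^ (μ - 1) * (σ (k + 1) - σ k) ^ (1 : ℝ) := by
          rw [← Real.rpow_add hlt]
          ring_nf
        rw [e1, Real.rpow_one]
        apply mul_le_mul_of_nonneg_right _ hΔ0
        exact Real.rpow_le_rpow hΔ0 hΔδ (by linarith)
    calc ‖S (t - σ (k + 1)) (Λg (σ (k + 1)) (σ k))‖ ≤ K * (σ (k + 1) - σ k) ^ μ :=
          le_trans h1 h2
      _ ≤ K' * (σ (k + 1) - σ k) ^ μ := h3
      _ ≤ K' * (δ ^ (μ - 1) * (σ (k + 1) - σ k)) :=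
          mul_le_mul_of_nonneg_left h4 hK'pos.le
      _ = K' * δ ^ (μ - 1) * (σ (k + 1) - σ k) := by ring
  have hsum : ∑ k ∈ Finset.range m, (σ (k + 1) - σ k) = t - s := by
    rw [Finset.sum_range_sub σ m, hσ0, hσm]
  calc ‖∑ k ∈ Finset.range m, S (t - σ (k + 1)) (Λg (σ (k + 1)) (σ k))‖
      ≤ ∑ k ∈ Finset.range m, ‖S (t - σ (k + 1)) (Λg (σ (k + 1)) (σ k))‖ :=
        norm_sum_le _ _
    _ ≤ ∑ k ∈ Finset.range m, K' * δ ^ (μ - 1) * (σ (k + 1) - σ k) :=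
        Finset.sum_le_sum fun k hk => hbound k (Finset.mem_range.mp hk)
    _ = K' * δ ^ (μ - 1) * (t - s) := by
        rw [← Finset.mul_sum, hsum]
    _ ≤ K' * δ ^ (μ - 1) * T := by
        apply mul_le_mul_of_nonneg_left _ (by positivity)
        linarith
    _ ≤ K' * (ε / A) * T := by
        apply mul_le_mul_of_nonneg_right _ hT.le
        exact mul_le_mul_of_nonneg_left hδpow hK'pos.le
    _ < ε := by
        have hlt : K' * T < A := by rw [hAdef]; nlinarith [hK'pos]
        have heq : K' * (ε / A) * T = ε * (K' * T) / A := by ring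
        rw [heq, div_lt_iff₀ hApos]
        calc ε * (K' * T) < ε * A := mul_lt_mul_of_pos_left hlt hε
          _ = ε * A := rfl
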